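/- Let (φ_m)_{m∈ℤ} be an orthonormal family in ℓ²(ℤ), let q ≥ 0, α > 3/2 + q/2, and γ_α > 0, and assume |φ_m(n)| ≤ γ_α / |n − m|^α for all m, n ∈ ℤ with m ≠ n. Set ε₀ = α − 3/2 − q/2 > 0. Then for every k ∈ ℤ there exists a constant C_k > 0 such that for every n ∈ ℤ with |n| ≥ 2 and n ∉ {k−1, k, k+1}: Σ_{m∈ℤ} |φ_m(k)| · |φ_m(n)| ≤ C_k / |n − k|^{(1+q+ε₀)/2}. In particular, uniformly in t ∈ ℝ, |Σ_{m∈ℤ} e^{−itλ(m)} conj(φ_m(k)) φ_m(n)| ≤ C_k / |n − k|^{(1+q+ε₀)/2} for any λ : ℤ → ℝ. -/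

import Mathlib

noncomputable section

open scoped BigOperators ComplexConjugate

abbrev ℓ2 : Type := lp (fun _ : ℤ => ℂ) 2

theorem stmt_6
    (φ : ℤ → ℓ2)
    (hON : Orthonormal ℂ φ)
    (q : ℝ) (hq : 0 ≤ q)
    (α : ℝ) (hα : 3 / 2 + q / 2 < α)
    (γα : ℝ) (hγα : 0 < γα)
    (hULE : ∀ m n : ℤ, m ≠ n →
      ‖(φ m : ∀ _ : ℤ, ℂ) n‖ ≤ γα / (|n - m| : ℝ) ^ α) :
    ∀ k : ℤ, ∃ Ck > 0, ∀ n : ℤ, 2 ≤ |n| →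
      n ≠ k - 1 → n ≠ k → n ≠ k + 1 →
      (∑' m : ℤ, ‖(φ m : ∀ _ : ℤ, ℂ) k‖ * ‖(φ m : ∀ _ : ℤ, ℂ) n‖)
          ≤ Ck / (|n - k| : ℝ) ^ ((1 + q + (α - 3 / 2 - q / 2)) / 2) ∧
      ∀ (lam : ℤ → ℝ) (t : ℝ),
        ‖∑' m : ℤ, Complex.exp (-(Complex.I * t * lam m)) *
            conj ((φ m : ∀ _ : ℤ, ℂ) k) * (φ m : ∀ _ : ℤ, ℂ) n‖
          ≤ Ck / (|n - k| : ℝ) ^ ((1 + q + (α - 3 / 2 - q / 2)) / 2) := by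
  have hα1 : (1 : ℝ) < α := by linarith
  have hα0 : (0 : ℝ) < α := by linarith
  -- coordinate norms are ≤ 1
  have hcoord : ∀ m l : ℤ, ‖(φ m : ∀ _ : ℤ, ℂ) l‖ ≤ 1 := by
    intro m l
    have h := lp.norm_apply_le_norm two_ne_zero (φ m) l
    simpa [hON.1 m] using h
  -- summability of the master p-series over ℤ
  have hT : Summable (fun j : ℤ => |(j : ℝ)| ^ (-α)) := Real.summable_abs_int_rpow hα1
  set T : ℝ := ∑' j : ℤ, |(j : ℝ)| ^ (-α) with hTdef
  have hT0 : 0 ≤ T := tsum_nonneg fun j => Real.rpow_nonneg (abs_nonneg _) _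
  set B : ℝ := γα * T + 1 with hBdef
  have hB : 0 < B := by positivity
  -- for every l, the coordinate sequence is summable with ℓ¹-norm ≤ B
  have key : ∀ l : ℤ, Summable (fun m : ℤ => ‖(φ m : ∀ _ : ℤ, ℂ) l‖) ∧
      (∑' m : ℤ, ‖(φ m : ∀ _ : ℤ, ℂ) l‖) ≤ B := by
    intro l
    -- majorant
    set g : ℤ → ℝ := fun m => γα * |((m : ℝ) - l)| ^ (-α) + (if m = l then 1 else 0) with hgdef
    have hgs : Summable g := by
      apply Summable.add
      · apply Summable.mul_left
        have : Summable (fun j : ℤ => |((j : ℝ))| ^ (-α)) := hT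
        have := this.comp_injective (Equiv.subRight l).injective
        refine this.congr fun m => ?_
        simp [Equiv.subRight]
      · exact summable_of_ne_finset_zero (s := {l}) (by intro m hm; simp at hm; simp [hm])
    have hle : ∀ m : ℤ, ‖(φ m : ∀ _ : ℤ, ℂ) l‖ ≤ g m := by
      intro m
      by_cases hml : m = l
      · subst hml
        have h0 : |(m : ℝ) - m| ^ (-α) = 0 := by
          simp [Real.zero_rpow (by linarith : -α ≠ 0)]
        simp only [hgdef, h0, if_pos rfl, mul_zero, zero_add]
        exact hcoord m m
      · have h := hULE m l hml
        have hne : ((l : ℝ) - m) ≠ 0 := by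
          intro h0
          apply hml
          have : (l : ℝ) = m := by linarith
          exact_mod_cast this.symm
        have habs : (0 : ℝ) < |(l : ℝ) - m| := abs_pos.mpr hne
        have : γα / |(l : ℝ) - m| ^ α = γα * |(m : ℝ) - l| ^ (-α) := by
          rw [Real.rpow_neg (abs_nonneg _), abs_sub_comm ((m:ℝ)) ((l:ℝ))]
          ring
        rw [this] at h
        refine h.trans ?_
        simp [hgdef, hml]
    refine ⟨Summable.of_nonneg_of_le (fun m => norm_nonneg _) hle hgs, ?_⟩
    have h1 : (∑' m : ℤ, ‖(φ m : ∀ _ : ℤ, ℂ) l‖) ≤ ∑' m, g m :=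
      Summable.tsum_le_tsum hle (Summable.of_nonneg_of_le (fun m => norm_nonneg _) hle hgs) hgs
    refine h1.trans ?_
    have h2 : ∑' m, g m = γα * (∑' m : ℤ, |((m : ℝ) - l)| ^ (-α)) + 1 := by
      rw [hgdef, Summable.tsum_add]
      · congr 1
        · exact tsum_mul_left
        · rw [tsum_eq_single l] <;> simp +contextual
      · apply Summable.mul_left
        have := hT.comp_injective (Equiv.subRight l).injective
        refine this.congr fun m => ?_
        simp [Equiv.subRight]
      · exact summable_of_ne_finset_zero (s := {l}) (by intro m hm; simp at hm; simp [hm])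
    rw [h2, hBdef]
    have h3 : (∑' m : ℤ, |((m : ℝ) - l)| ^ (-α)) = T := by
      rw [hTdef]
      have := (Equiv.subRight l).tsum_eq (fun j : ℤ => |(j : ℝ)| ^ (-α))
      rw [← this]
      apply tsum_congr
      intro m
      simp [Equiv.subRight]
    rw [h3]
  -- the constant
  intro k
  refine ⟨2 * B * γα * 2 ^ α, by positivity, ?_⟩
  intro n hn2 hnk1 hnk hnk2
  set P : ℝ := (1 + q + (α - 3 / 2 - q / 2)) / 2 with hPdef
  set a : ℤ → ℝ := fun m => ‖(φ m : ∀ _ : ℤ, ℂ) k‖ with hadef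
  set b : ℤ → ℝ := fun m => ‖(φ m : ∀ _ : ℤ, ℂ) n‖ with hbdef
  have hD2 : (2 : ℝ) ≤ |(n : ℝ) - (k : ℝ)| := by
    have h2 : 2 ≤ |n - k| := by
      rcases le_or_gt k n with h | h
      · rw [abs_of_nonneg (by omega)]; omega
      · rw [abs_of_neg (by omega)]; omega
    have : ((|n - k| : ℤ) : ℝ) = |(n : ℝ) - (k : ℝ)| := by push_cast; ring_nf
    rw [← this]; exact_mod_cast h2
  set D : ℝ := |(n : ℝ) - (k : ℝ)| with hDdef
  have hD0 : (0 : ℝ) < D := by linarith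
  have hDabs : D = |(n : ℝ) - k| := rfl
  set c : ℝ := γα * 2 ^ α / D ^ α with hcdef
  have hc0 : 0 < c := by positivity
  -- key pointwise bound : a m * b m ≤ c * (a m + b m)
  have hpoint : ∀ m : ℤ, a m * b m ≤ c * (a m + b m) := by
    intro m
    have ha0 : 0 ≤ a m := norm_nonneg _
    have hb0 : 0 ≤ b m := norm_nonneg _
    have htri : D / 2 ≤ |(m : ℝ) - k| ∨ D / 2 ≤ |(m : ℝ) - n| := by
      by_contra hcon
      push_neg at hcon
      rw [hDabs] at hcon
      obtain ⟨h1, h2⟩ := hcon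
      have h3 : |(n : ℝ) - k| ≤ |(n : ℝ) - m| + |(m : ℝ) - k| :=
        abs_sub_le _ _ _
      have h4 : |(n : ℝ) - m| = |(m : ℝ) - n| := abs_sub_comm _ _
      linarith
    have hhalf : (1 : ℝ) ≤ D / 2 := by linarith
    -- in either case one factor is ≤ c
    rcases htri with h | h
    · have hmk : m ≠ k := by
        intro he; subst he; simp at h; linarith
      have hak : a m ≤ c := by
        have hb := hULE m k hmk
        rw [abs_sub_comm ((k:ℝ)) ((m:ℝ))] at hb
        refine hb.trans ?_
        rw [hcdef]
        have habsmk : (0:ℝ) < |(m : ℝ) - k| := by linarith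
        rw [div_le_div_iff₀ (Real.rpow_pos_of_pos habsmk α) (by positivity)]
        have hrp : (D / 2) ^ α ≤ |(m : ℝ) - k| ^ α :=
          Real.rpow_le_rpow (by positivity) h hα0.le
        have h2D : (D / 2) ^ α * 2 ^ α = D ^ α := by
          rw [← Real.mul_rpow (by positivity) (by norm_num)]
          congr 1; field_simp
        calc γα * D ^ α = γα * ((D/2) ^ α * 2 ^ α) := by rw [h2D]
          _ ≤ γα * (|(m : ℝ) - k| ^ α * 2 ^ α) := by
              have h2p : (0:ℝ) < (2:ℝ) ^ α := Real.rpow_pos_of_pos two_pos α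
              have h' := mul_le_mul_of_nonneg_right hrp h2p.le
              exact mul_le_mul_of_nonneg_left h' hγα.le
          _ = γα * 2 ^ α * |(m : ℝ) - k| ^ α := by ring
      calc a m * b m ≤ c * b m := mul_le_mul_of_nonneg_right hak hb0
        _ ≤ c * (a m + b m) := by nlinarith
    · have hmn : m ≠ n := by
        intro he; subst he; simp at h; linarith
      have hbk : b m ≤ c := by
        have hb := hULE m n hmn
        rw [abs_sub_comm ((n:ℝ)) ((m:ℝ))] at hb
        refine hb.trans ?_
        rw [hcdef]
        have habsmn : (0:ℝ) < |(m : ℝ) - n| := by linarith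
        rw [div_le_div_iff₀ (Real.rpow_pos_of_pos habsmn α) (by positivity)]
        have hrp : (D / 2) ^ α ≤ |(m : ℝ) - n| ^ α :=
          Real.rpow_le_rpow (by positivity) h hα0.le
        have h2D : (D / 2) ^ α * 2 ^ α = D ^ α := by
          rw [← Real.mul_rpow (by positivity) (by norm_num)]
          congr 1; field_simp
        calc γα * D ^ α = γα * ((D/2) ^ α * 2 ^ α) := by rw [h2D]
          _ ≤ γα * (|(m : ℝ) - n| ^ α * 2 ^ α) := by
              have h2p : (0:ℝ) < (2:ℝ) ^ α := Real.rpow_pos_of_pos two_pos α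
              have h' := mul_le_mul_of_nonneg_right hrp h2p.le
              exact mul_le_mul_of_nonneg_left h' hγα.le
          _ = γα * 2 ^ α * |(m : ℝ) - n| ^ α := by ring
      calc a m * b m ≤ a m * c := mul_le_mul_of_nonneg_left hbk ha0
        _ ≤ c * (a m + b m) := by nlinarith
  obtain ⟨hsa, hta⟩ := key k
  obtain ⟨hsb, htb⟩ := key n
  have hsab : Summable (fun m : ℤ => a m * b m) := by
    refine Summable.of_nonneg_of_le (fun m => mul_nonneg (norm_nonneg _) (norm_nonneg _))
      (fun m => ?_) hsb
    calc a m * b m ≤ 1 * b m :=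
          mul_le_mul_of_nonneg_right (hcoord m k) (norm_nonneg _)
      _ = b m := one_mul _
  have hmain : (∑' m : ℤ, a m * b m) ≤ 2 * B * γα * 2 ^ α / D ^ P := by
    have h1 : (∑' m : ℤ, a m * b m) ≤ ∑' m : ℤ, c * (a m + b m) :=
      Summable.tsum_le_tsum hpoint hsab (((hsa.add hsb)).mul_left c)
    have h2 : (∑' m : ℤ, c * (a m + b m)) = c * ((∑' m, a m) + ∑' m, b m) := by
      rw [tsum_mul_left, Summable.tsum_add hsa hsb]
    have h3 : c * ((∑' m, a m) + ∑' m, b m) ≤ c * (2 * B) := by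
      apply mul_le_mul_of_nonneg_left _ hc0.le
      linarith
    have hPα : P ≤ α := by rw [hPdef]; linarith
    have hDP : D ^ P ≤ D ^ α := Real.rpow_le_rpow_of_exponent_le (by linarith) hPα
    have h4 : c * (2 * B) ≤ 2 * B * γα * 2 ^ α / D ^ P := by
      rw [hcdef]
      rw [div_mul_eq_mul_div, div_le_div_iff₀ (by positivity) (by positivity)]
      have hK : (0:ℝ) ≤ 2 * B * γα * 2 ^ α := by positivity
      have := mul_le_mul_of_nonneg_left hDP hK
      nlinarith
    exact h1.trans (h2.le.trans (h3.trans h4))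
  constructor
  · exact hmain
  · intro lam t
    have hnorm : ∀ m : ℤ, ‖Complex.exp (-(Complex.I * t * lam m)) *
        conj ((φ m : ∀ _ : ℤ, ℂ) k) * (φ m : ∀ _ : ℤ, ℂ) n‖ = a m * b m := by
      intro m
      rw [norm_mul, norm_mul]
      have he : ‖Complex.exp (-(Complex.I * t * lam m))‖ = 1 := by
        rw [Complex.norm_exp]
        simp
      rw [he, one_mul, RCLike.norm_conj]
    have hsF : Summable (fun m : ℤ => Complex.exp (-(Complex.I * t * lam m)) *
        conj ((φ m : ∀ _ : ℤ, ℂ) k) * (φ m : ∀ _ : ℤ, ℂ) n) := by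
      apply Summable.of_norm
      refine hsab.congr fun m => (hnorm m).symm
    calc ‖∑' m : ℤ, Complex.exp (-(Complex.I * t * lam m)) *
            conj ((φ m : ∀ _ : ℤ, ℂ) k) * (φ m : ∀ _ : ℤ, ℂ) n‖
        ≤ ∑' m : ℤ, ‖Complex.exp (-(Complex.I * t * lam m)) *
            conj ((φ m : ∀ _ : ℤ, ℂ) k) * (φ m : ∀ _ : ℤ, ℂ) n‖ :=
          norm_tsum_le_tsum_norm (by refine hsab.congr fun m => (hnorm m).symm)
      _ = ∑' m : ℤ, a m * b m := tsum_congr hnorm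
      _ ≤ 2 * B * γα * 2 ^ α / D ^ P := hmain
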